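/- Let Γ be a connected vertex-transitive locally finite graph whose ends all have diameter < k for a uniform constant k > 0. Then there exists m > 0 such that for all vertices u, v, every geodesic η from u to v, every z on η, and every path γ from u to v, dist(z, γ) ≤ m. -/

import Mathlib

open SimpleGraph CategoryTheory


/-- The boundary of a set of vertices: its vertices having a neighbour outside. -/
def bdry {V : Type*} (G : SimpleGraph V) (B : Set V) : Set V :=
  {v | v ∈ B ∧ ∃ u, u ∉ B ∧ G.Adj v u}

/-- An injective infinite path in a graph. -/
def IsInfPath {V : Type*} (G : SimpleGraph V) (p : ℕ → V) : Prop :=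
  Function.Injective p ∧ ∀ n : ℕ, G.Adj (p n) (p (n + 1))

/-- The path `p` is almost contained in `B`. -/
def AlmostIn {V : Type*} (p : ℕ → V) (B : Set V) : Prop := {n : ℕ | p n ∉ B}.Finite

/-- Two infinite paths define the same end: they are almost contained in the same sets
with finite boundary. -/
def SameEnd {V : Type*} (G : SimpleGraph V) (p q : ℕ → V) : Prop :=
  ∀ B : Set V, (bdry G B).Finite → (AlmostIn p B ↔ AlmostIn q B)

/-- The end of `p` has diameter `< k`: there is a nested sequence of sets with boundary of
size `< k` converging to the end of `p` (their closures intersect exactly in this end). -/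
def EndDiamLT {V : Type*} (G : SimpleGraph V) (p : ℕ → V) (k : ℕ) : Prop :=
  ∃ B : ℕ → Set V,
    (∀ n : ℕ, (bdry G (B n)).Finite ∧ (bdry G (B n)).ncard < k) ∧
    (∀ n : ℕ, B (n + 1) ⊆ B n) ∧
    (∀ n : ℕ, AlmostIn p (B n)) ∧
    (⋂ n : ℕ, B n) = ∅ ∧
    (∀ q : ℕ → V, IsInfPath G q → (∀ n : ℕ, AlmostIn q (B n)) → SameEnd G p q)

namespace EndsAux

variable {V : Type*} {G : SimpleGraph V} {u v x y z : V} {S : Set V}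

lemma walk_split (w : G.Walk u v) (i : ℕ) (hi : i ≤ w.length) :
    ∃ (w1 : G.Walk u (w.getVert i)) (w2 : G.Walk (w.getVert i) v),
      w1.length = i ∧ w2.length = w.length - i ∧
      (∀ a : ℕ, w1.getVert a = w.getVert (min a i)) ∧
      (∀ a : ℕ, w2.getVert a = w.getVert (i + a)) := by
  induction w generalizing i with
  | nil =>
    simp only [Walk.length_nil, Nat.le_zero] at hi
    subst hi
    refine ⟨Walk.nil, Walk.nil, rfl, rfl, ?_, ?_⟩ <;> simp [Walk.getVert]
  | @cons a b c h q ih =>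
    cases i with
    | zero =>
      refine ⟨Walk.nil, (Walk.cons h q).copy (Walk.getVert_zero _).symm rfl, ?_⟩
      simp [Walk.getVert]
    | succ n =>
      have hn : n ≤ q.length := by simpa [Nat.succ_le_succ_iff] using hi
      obtain ⟨w1, w2, h1, h2, h3, h4⟩ := ih n hn
      refine ⟨(w1.cons h).copy rfl (Walk.getVert_cons_succ _ _).symm,
        w2.copy (Walk.getVert_cons_succ _ _).symm rfl, ?_, ?_, ?_, ?_⟩
      · simpa using h1
      · simpa using h2
      · intro a
        cases a with
        | zero => simp [Walk.getVert]
        | succ m =>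
          rw [Walk.getVert_copy, Walk.getVert_cons_succ, h3 m]
          have : min (m + 1) (n + 1) = (min m n) + 1 := by omega
          rw [this, Walk.getVert_cons_succ]
      · intro a
        simp only [Walk.getVert_copy]
        rw [h4 a]
        have : n + 1 + a = (n + a) + 1 := by omega
        rw [this, Walk.getVert_cons_succ]


lemma walk_from_to (w : G.Walk u v) {i j : ℕ} (hij : i ≤ j) (hj : j ≤ w.length) :
    ∃ w' : G.Walk (w.getVert i) (w.getVert j), w'.length = j - i ∧
      ∀ a : ℕ, w'.getVert a = w.getVert (min (i + a) j) := by
  obtain ⟨w1, w2, h1, h2, h3, h4⟩ := walk_split w i (hij.trans hj)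
  obtain ⟨w21, w22, g1, g2, g3, g4⟩ := walk_split w2 (j - i) (by omega)
  have hend : w2.getVert (j - i) = w.getVert j := by rw [h4]; congr 1; omega
  refine ⟨w21.copy rfl hend, by simpa using g1, ?_⟩
  intro a
  simp only [Walk.getVert_copy]
  rw [g3 a, h4]
  congr 1
  omega

lemma dist_getVert_le (w : G.Walk u v) {i j : ℕ} (hij : i ≤ j) (hj : j ≤ w.length) :
    G.dist (w.getVert i) (w.getVert j) ≤ j - i := by
  obtain ⟨w', hw', -⟩ := walk_from_to w hij hj
  simpa [hw'] using dist_le w'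

lemma geodesic_getVert_dist (hconn : G.Connected) (w : G.Walk u v)
    (hw : w.length = G.dist u v) {i j : ℕ} (hij : i ≤ j) (hj : j ≤ w.length) :
    G.dist (w.getVert i) (w.getVert j) = j - i := by
  have h1 : G.dist u (w.getVert i) ≤ i := by
    have := dist_getVert_le w (Nat.zero_le i) (hij.trans hj)
    simpa [Walk.getVert_zero] using this
  have h2 : G.dist (w.getVert j) v ≤ w.length - j := by
    have := dist_getVert_le w hj (le_refl w.length)
    simpa [Walk.getVert_length] using this
  have h3 : G.dist (w.getVert i) (w.getVert j) ≤ j - i := dist_getVert_le w hij hj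
  have t1 := hconn.dist_triangle (u := u) (v := w.getVert i) (w := w.getVert j)
  have t2 := hconn.dist_triangle (u := u) (v := w.getVert j) (w := v)
  omega

lemma dist_map (hconn : G.Connected) (e : G ≃g G) (x y : V) :
    G.dist (e x) (e y) = G.dist x y := by
  have key : ∀ a b : V, ∀ f : G ≃g G, G.dist (f a) (f b) ≤ G.dist a b := by
    intro a b f
    obtain ⟨w, hw⟩ := hconn.exists_walk_length_eq_dist a b
    have := dist_le (w.map f.toHom)
    rwa [Walk.length_map, hw] at this
  have h1 := key x y e
  have h2 := key (e x) (e y) e.symm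
  simp only [RelIso.symm_apply_apply] at h2
  omega

lemma ball_finite (hconn : G.Connected) (hlf : ∀ v : V, (G.neighborSet v).Finite)
    (o : V) : ∀ R : ℕ, {v : V | G.dist o v ≤ R}.Finite := by
  intro R
  induction R with
  | zero =>
    have : {v : V | G.dist o v ≤ 0} ⊆ {o} := by
      intro x hx
      simp only [Set.mem_setOf_eq, Nat.le_zero] at hx
      have := (hconn.dist_eq_zero_iff (u := o) (v := x)).mp hx
      simp [this]
    exact (Set.finite_singleton o).subset this
  | succ R ih =>
    have hsub : {v : V | G.dist o v ≤ R + 1} ⊆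
        {v : V | G.dist o v ≤ R} ∪ ⋃ x ∈ {v : V | G.dist o v ≤ R}, G.neighborSet x := by
      intro y hy
      simp only [Set.mem_setOf_eq] at hy
      by_cases hR : G.dist o y ≤ R
      · exact Or.inl hR
      · have hd : G.dist o y = R + 1 := by omega
        obtain ⟨w, hw⟩ := hconn.exists_walk_length_eq_dist o y
        have hlen : R < w.length := by omega
        have hx : G.dist o (w.getVert R) ≤ R := by
          have := dist_getVert_le w (Nat.zero_le R) hlen.le
          simpa [Walk.getVert_zero] using this
        have hadj : G.Adj (w.getVert R) (w.getVert (R + 1)) := w.adj_getVert_succ hlen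
        have : w.getVert (R + 1) = y := by
          have : w.length ≤ R + 1 := by omega
          simpa [Walk.getVert_of_length_le w this]
        rw [this] at hadj
        exact Or.inr (Set.mem_biUnion hx hadj)
    exact ((ih.union (Set.Finite.biUnion ih (fun x _ => hlf x)))).subset hsub


/-- reachability avoiding a set -/
def Reach (G : SimpleGraph V) (S : Set V) (x y : V) : Prop :=
  ∃ w : G.Walk x y, ∀ v ∈ w.support, v ∉ S

lemma Reach.start_not_mem (h : Reach G S x y) : x ∉ S := by
  obtain ⟨w, hw⟩ := h; exact hw x w.start_mem_support

lemma Reach.end_not_mem (h : Reach G S x y) : y ∉ S := by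
  obtain ⟨w, hw⟩ := h; exact hw y w.end_mem_support

lemma Reach.refl (hx : x ∉ S) : Reach G S x x :=
  ⟨Walk.nil, fun v hv => by simp only [Walk.support_nil, List.mem_singleton] at hv; exact hv ▸ hx⟩

lemma Reach.symm (h : Reach G S x y) : Reach G S y x := by
  obtain ⟨w, hw⟩ := h
  exact ⟨w.reverse, by simpa [Walk.support_reverse] using hw⟩

lemma Reach.trans (h : Reach G S x y) (h' : Reach G S y z) : Reach G S x z := by
  obtain ⟨w, hw⟩ := h; obtain ⟨w', hw'⟩ := h'
  refine ⟨w.append w', ?_⟩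
  intro v hv
  rcases (Walk.mem_support_append_iff _ _).mp hv with h | h
  · exact hw v h
  · exact hw' v h

lemma Reach.adj (h : Reach G S x y) (hadj : G.Adj y z) (hz : z ∉ S) : Reach G S x z := by
  obtain ⟨w, hw⟩ := h
  refine ⟨w.append (Walk.cons hadj Walk.nil), ?_⟩
  intro v hv
  rcases (Walk.mem_support_append_iff _ _).mp hv with h | h
  · exact hw v h
  · simp only [Walk.support_cons, Walk.support_nil, List.mem_cons] at h
    rcases h with rfl | h
    · exact hw v w.end_mem_support
    · rcases h with rfl | h
      · exact hz
      · simp at h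

lemma Reach.mono {S' : Set V} (hS : S' ⊆ S) (h : Reach G S x y) : Reach G S' x y := by
  obtain ⟨w, hw⟩ := h
  exact ⟨w, fun v hv hvS => hw v hv (hS hvS)⟩

/-- walks avoiding the boundary of B that start in B stay in B -/
lemma walk_stay {B : Set V} (w : G.Walk x y) (hx : x ∈ B)
    (hS : ∀ v ∈ w.support, v ∉ bdry G B) : ∀ v ∈ w.support, v ∈ B := by
  induction w with
  | nil => simpa using hx
  | @cons a b c h q ih =>
    have hbB : b ∈ B := by
      by_contra hbB
      exact hS a (by simp) ⟨hx, b, hbB, h⟩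
    intro v hv
    simp only [Walk.support_cons, List.mem_cons] at hv
    rcases hv with rfl | hv
    · exact hx
    · exact ih hbB (fun v hv => hS v (by simp [Walk.support_cons, hv])) v hv

lemma reach_stay {B : Set V} (h : Reach G (bdry G B) x y) (hx : x ∈ B) : y ∈ B := by
  obtain ⟨w, hw⟩ := h
  exact walk_stay w hx hw y w.end_mem_support

/-- a tight separator with respect to two sides -/
def Tight (G : SimpleGraph V) (S : Set V) (a b : V) : Prop :=
  a ∉ S ∧ b ∉ S ∧ ¬ Reach G S a b ∧
  ∀ s ∈ S, (∃ c, G.Adj c s ∧ Reach G S a c) ∧ (∃ c, G.Adj c s ∧ Reach G S b c)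

lemma remove_ok [DecidableEq V] {a b s : V} (ha : a ∉ S) (hs : s ∈ S)
    (hnc : ¬ ∃ c, G.Adj c s ∧ Reach G S a c) (hsep : ¬ Reach G S a b) :
    ¬ Reach G (S \ {s}) a b := by
  rintro ⟨w, hw⟩
  have hsmem : s ∈ w.support := by
    by_contra hsw
    refine hsep ⟨w, fun v hv => ?_⟩
    intro hvS
    by_cases hvs : v = s
    · exact hsw (hvs ▸ hv)
    · exact hw v hv ⟨hvS, hvs⟩
  set w' := w.takeUntil s hsmem with hw'
  have hsupsub := Walk.support_takeUntil_subset w hsmem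
  have hcount : List.count s w'.support = 1 := Walk.count_support_takeUntil_eq_one w hsmem
  have has : a ≠ s := fun h => ha (h ▸ hs)
  set r := w'.reverse with hr
  have hrnil : ¬ r.Nil := Walk.not_nil_of_ne (Ne.symm has)
  have hadj : G.Adj s (r.getVert 1) := r.adj_snd hrnil
  set c := r.getVert 1 with hc
  have htail : r.tail.support = r.support.tail := Walk.support_tail_of_not_nil r hrnil
  have hrsup : r.support = s :: r.support.tail := Walk.support_eq_cons r
  have hsnott : s ∉ r.support.tail := by
    intro hmem
    have h1 : List.count s r.support = List.count s w'.support := by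
      rw [hr, Walk.support_reverse, List.count_reverse]
    have h2 : 2 ≤ List.count s r.support := by
      rw [hrsup]
      have := List.count_pos_iff.mpr hmem
      simp only [List.count_cons_self]
      omega
    rw [h1, hcount] at h2
    omega
  have htailS : ∀ v ∈ r.tail.support, v ∉ S := by
    intro v hv hvS
    rw [htail] at hv
    have hvs : v ≠ s := fun h => hsnott (h ▸ hv)
    have hv1 : v ∈ r.support := hrsup ▸ List.mem_cons_of_mem s hv
    have hv2 : v ∈ w'.support := by
      rwa [hr, Walk.support_reverse, List.mem_reverse] at hv1
    exact hw v (hsupsub hv2) ⟨hvS, hvs⟩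
  exact hnc ⟨c, hadj.symm, ⟨r.tail.reverse, by
    intro v hv
    rw [Walk.support_reverse, List.mem_reverse] at hv
    exact htailS v hv⟩⟩


lemma not_reach_symm {a b : V} (h : ¬ Reach G S a b) : ¬ Reach G S b a :=
  fun r => h r.symm

lemma trim [DecidableEq V] : ∀ (n : ℕ) (S : Set V), S.Finite → S.ncard ≤ n →
    ∀ a b : V, a ∉ S → b ∉ S → ¬ Reach G S a b →
    ∃ T, T ⊆ S ∧ Tight G T a b := by
  intro n
  induction n with
  | zero =>
    intro S hfin hcard a b ha hb hsep
    have hS0 : S = ∅ := by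
      rw [← Set.ncard_eq_zero hfin]
      omega
    subst hS0
    exact ⟨∅, subset_rfl, ha, hb, hsep, by simp⟩
  | succ n ih =>
    intro S hfin hcard a b ha hb hsep
    by_cases h : ∀ s ∈ S, (∃ c, G.Adj c s ∧ Reach G S a c) ∧ (∃ c, G.Adj c s ∧ Reach G S b c)
    · exact ⟨S, subset_rfl, ha, hb, hsep, h⟩
    · push_neg at h
      obtain ⟨s, hs, hcond⟩ := h
      by_cases hA : ∃ c, G.Adj c s ∧ Reach G S a c
      · -- then the b side fails
        have hB : ¬ ∃ c, G.Adj c s ∧ Reach G S b c := by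
          have := hcond hA
          rintro ⟨c, h1, h2⟩
          exact this c h1 h2
        have hsep' : ¬ Reach G (S \ {s}) a b :=
          not_reach_symm (remove_ok hb hs hB (not_reach_symm hsep))
        have hfin' : (S \ {s}).Finite := hfin.diff
        have hcard' : (S \ {s}).ncard ≤ n := by
          have := Set.ncard_diff_singleton_lt_of_mem hs hfin
          omega
        obtain ⟨T, hT, htight⟩ := ih (S \ {s}) hfin' hcard' a b
          (fun hmem => ha hmem.1) (fun hmem => hb hmem.1) hsep'
        exact ⟨T, hT.trans Set.diff_subset, htight⟩
      · have hsep' : ¬ Reach G (S \ {s}) a b := remove_ok ha hs hA hsep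
        have hfin' : (S \ {s}).Finite := hfin.diff
        have hcard' : (S \ {s}).ncard ≤ n := by
          have := Set.ncard_diff_singleton_lt_of_mem hs hfin
          omega
        obtain ⟨T, hT, htight⟩ := ih (S \ {s}) hfin' hcard' a b
          (fun hmem => ha hmem.1) (fun hmem => hb hmem.1) hsep'
        exact ⟨T, hT.trans Set.diff_subset, htight⟩

lemma infinite_fiber {α β : Type*} {s : Set α} (hs : s.Infinite) (f : α → β) {P : Set β}
    (hP : P.Finite) (hf : ∀ x ∈ s, f x ∈ P) : ∃ t ∈ P, {x ∈ s | f x = t}.Infinite := by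
  by_contra h
  push_neg at h
  have hsub : s ⊆ ⋃ t ∈ P, {x ∈ s | f x = t} := fun x hx => Set.mem_biUnion (hf x hx) ⟨hx, rfl⟩
  have hfin : (⋃ t ∈ P, {x ∈ s | f x = t}).Finite :=
    hP.biUnion (fun t ht => h t ht)
  exact hs (hfin.subset hsub)

lemma tw_fixed (hconn : G.Connected) (hlf : ∀ v : V, (G.neighborSet v).Finite)
    (o : V) (k : ℕ) (a b : V) :
    {S : Set V | o ∈ S ∧ S.Finite ∧ S.ncard < k ∧ Tight G S a b}.Finite := by
  classical
  by_contra hinf'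
  have hinf : {S : Set V | o ∈ S ∧ S.Finite ∧ S.ncard < k ∧ Tight G S a b}.Infinite := hinf'
  set 𝒮₀ := {S : Set V | o ∈ S ∧ S.Finite ∧ S.ncard < k ∧ Tight G S a b} with h𝒮₀
  set ball : ℕ → Set V := fun R => {v : V | G.dist o v ≤ R} with hball
  have hballfin : ∀ R, (ball R).Finite := ball_finite hconn hlf o
  have hballmono : ∀ {R R' : ℕ}, R ≤ R' → ball R ⊆ ball R' := by
    intro R R' h v hv
    exact le_trans hv h
  -- the selection step
  have key : ∀ (R : ℕ) (𝒮 : Set (Set V)), ∃ (𝒮' : Set (Set V)) (t : Set V),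
      𝒮.Infinite → (𝒮' ⊆ 𝒮 ∧ 𝒮'.Infinite ∧ ∀ S ∈ 𝒮', S ∩ ball R = t) := by
    intro R 𝒮
    by_cases h : 𝒮.Infinite
    · obtain ⟨t, ht, htinf⟩ := infinite_fiber h (fun S => S ∩ ball R)
        ((hballfin R).finite_subsets) (fun S _ => Set.inter_subset_right)
      exact ⟨{S ∈ 𝒮 | S ∩ ball R = t}, t, fun _ =>
        ⟨Set.sep_subset _ _, htinf, fun S hS => hS.2⟩⟩
    · exact ⟨∅, ∅, fun h' => absurd h' h⟩
  choose F T hFT using key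
  set C : ℕ → Set (Set V) := fun R => Nat.rec (F 0 𝒮₀) (fun n prev => F (n + 1) prev) R with hC
  set t : ℕ → Set V := fun R => Nat.rec (T 0 𝒮₀) (fun n prev => T (n + 1) (C n)) R with ht
  have hC0 : C 0 = F 0 𝒮₀ := rfl
  have hCsucc : ∀ R, C (R + 1) = F (R + 1) (C R) := fun R => rfl
  have ht0 : t 0 = T 0 𝒮₀ := rfl
  have htsucc : ∀ R, t (R + 1) = T (R + 1) (C R) := fun R => rfl
  have hmain : ∀ R, C R ⊆ 𝒮₀ ∧ (C R).Infinite ∧ (∀ S ∈ C R, S ∩ ball R = t R) := by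
    intro R
    induction R with
    | zero =>
      obtain ⟨h1, h2, h3⟩ := hFT 0 𝒮₀ hinf
      exact ⟨h1, h2, h3⟩
    | succ n ih =>
      obtain ⟨h1, h2, h3⟩ := hFT (n + 1) (C n) ih.2.1
      exact ⟨(h1.trans ih.1), h2, h3⟩
  have hmono : ∀ R, C (R + 1) ⊆ C R := by
    intro R
    exact (hFT (R + 1) (C R) (hmain R).2.1).1
  have hchain : ∀ (R R' : ℕ), R ≤ R' → C R' ⊆ C R := by
    intro R R' h
    induction R', h using Nat.le_induction with
    | base => exact subset_rfl
    | succ n hn ih => exact (hmono n).trans ih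
  have htmono : ∀ {R R' : ℕ}, R ≤ R' → t R ⊆ t R' := by
    intro R R' h
    obtain ⟨S, hS⟩ := (hmain R').2.1.nonempty
    have e1 : S ∩ ball R' = t R' := (hmain R').2.2 S hS
    have e2 : S ∩ ball R = t R := (hmain R).2.2 S (hchain _ _ h hS)
    rw [← e1, ← e2]
    exact Set.inter_subset_inter subset_rfl (hballmono h)
  have htfin : ∀ R, (t R).Finite := by
    intro R
    obtain ⟨S, hS⟩ := (hmain R).2.1.nonempty
    rw [← (hmain R).2.2 S hS]
    exact (hballfin R).subset Set.inter_subset_right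
  have htcard : ∀ R, (t R).ncard < k := by
    intro R
    obtain ⟨S, hS⟩ := (hmain R).2.1.nonempty
    have hS0 := (hmain R).1 hS
    rw [← (hmain R).2.2 S hS]
    calc (S ∩ ball R).ncard ≤ S.ncard := Set.ncard_le_ncard Set.inter_subset_left hS0.2.1
    _ < k := hS0.2.2.1
  -- stabilization
  have hstab : ∃ R0, ∀ R, R0 ≤ R → t R = t R0 := by
    have hbdd : BddAbove (Set.range fun R => (t R).ncard) := by
      refine ⟨k, ?_⟩
      rintro n ⟨R, rfl⟩
      exact (htcard R).le
    have hne : (Set.range fun R => (t R).ncard).Nonempty := ⟨(t 0).ncard, 0, rfl⟩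
    obtain ⟨R0, hR0⟩ := Nat.sSup_mem hne hbdd
    have hR0' : (t R0).ncard = sSup (Set.range fun R => (t R).ncard) := hR0
    refine ⟨R0, fun R hR => ?_⟩
    have h1 : t R0 ⊆ t R := htmono hR
    have h2 : (t R).ncard ≤ (t R0).ncard := by
      rw [hR0']
      exact le_csSup hbdd ⟨R, rfl⟩
    exact (Set.eq_of_subset_of_ncard_le h1 h2 (htfin R)).symm
  obtain ⟨R0, hR0⟩ := hstab
  set Tinf := t R0 with hTinf
  -- no reach avoiding Tinf
  have hnoreach : ¬ Reach G Tinf a b := by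
    rintro ⟨w, hw⟩
    have hsupball : ∀ v ∈ w.support, G.dist o v ≤ G.dist o a + w.length := by
      intro v hv
      obtain ⟨j, hj, hjle⟩ := Walk.mem_support_iff_exists_getVert.mp hv
      have h1 : G.dist a v ≤ j := by
        have := dist_getVert_le w (Nat.zero_le j) hjle
        rw [Walk.getVert_zero, hj] at this
        omega
      have := hconn.dist_triangle (u := o) (v := a) (w := v)
      omega
    set R := max R0 (G.dist o a + w.length) with hR
    obtain ⟨S, hS, hSne⟩ := Set.Infinite.exists_notMem_finite (hmain R).2.1 (Set.finite_singleton Tinf)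
    rw [Set.mem_singleton_iff] at hSne
    have hS0 := (hmain R).1 hS
    have hstable : S ∩ ball R = Tinf := by
      rw [(hmain R).2.2 S hS, hTinf, hR0 R (le_max_left _ _)]
    have htight := hS0.2.2.2
    have : ¬ ∀ v ∈ w.support, v ∉ S := by
      intro hall
      exact htight.2.2.1 ⟨w, hall⟩
    push_neg at this
    obtain ⟨v, hv, hvS⟩ := this
    have hvball : v ∈ ball R := le_trans (hsupball v hv) (le_max_right _ _)
    exact hw v hv (hstable ▸ Set.mem_inter hvS hvball)
  -- but Tinf can be bridged through a far vertex of some S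
  obtain ⟨S, hS, hSne⟩ := Set.Infinite.exists_notMem_finite (hmain R0).2.1 (Set.finite_singleton Tinf)
  rw [Set.mem_singleton_iff] at hSne
  have hS0 := (hmain R0).1 hS
  have hstable : S ∩ ball R0 = Tinf := by
    rw [(hmain R0).2.2 S hS, hTinf]
  have hTsub : Tinf ⊆ S := by
    rw [← hstable]; exact Set.inter_subset_left
  obtain ⟨s', hs'S, hs'T⟩ : ∃ s', s' ∈ S ∧ s' ∉ Tinf := by
    by_contra hcon
    push_neg at hcon
    exact hSne (Set.Subset.antisymm hcon hTsub)
  obtain ⟨hanS, hbnS, hnr, hcond⟩ := hS0.2.2.2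
  obtain ⟨⟨c1, hc1, hr1⟩, ⟨c2, hc2, hr2⟩⟩ := hcond s' hs'S
  have hra : Reach G Tinf a s' := (hr1.mono hTsub).adj hc1 hs'T
  have hrb : Reach G Tinf b s' := (hr2.mono hTsub).adj hc2 hs'T
  exact hnoreach (hra.trans hrb.symm)

lemma reach_map (e : G ≃g G) {x y : V} (h : Reach G S x y) :
    Reach G (e '' S) (e x) (e y) := by
  obtain ⟨w, hw⟩ := h
  refine ⟨w.map e.toHom, ?_⟩
  intro v hv
  rw [Walk.support_map, List.mem_map] at hv
  obtain ⟨v', hv', rfl⟩ := hv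
  rintro ⟨s, hsS, hse⟩
  have : s = v' := e.injective hse
  exact hw v' hv' (this ▸ hsS)

lemma reach_map_iff (e : G ≃g G) {x y : V} :
    Reach G (e '' S) (e x) (e y) ↔ Reach G S x y := by
  constructor
  · intro h
    have := reach_map e.symm h
    have himg : e.symm '' (e '' S) = S := by
      rw [← Set.image_comp]
      simp
    rw [himg] at this
    simpa using this
  · exact reach_map e

lemma tight_symm {a b : V} (h : Tight G S a b) : Tight G S b a :=
  ⟨h.2.1, h.1, fun r => h.2.2.1 r.symm, fun s hs => ⟨(h.2.2.2 s hs).2, (h.2.2.2 s hs).1⟩⟩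

lemma tight_rebase {a b a' : V} (h : Tight G S a b) (hr : Reach G S a a') :
    Tight G S a' b := by
  refine ⟨hr.end_not_mem, h.2.1, fun r => h.2.2.1 (hr.trans r), fun s hs => ?_⟩
  obtain ⟨⟨c, hc, hrc⟩, hb⟩ := h.2.2.2 s hs
  exact ⟨⟨c, hc, hr.symm.trans hrc⟩, hb⟩

lemma tight_map (e : G ≃g G) {a b : V} (h : Tight G S a b) :
    Tight G (e '' S) (e a) (e b) := by
  obtain ⟨ha, hb, hnr, hcond⟩ := h
  refine ⟨?_, ?_, ?_, ?_⟩
  · rintro ⟨s, hsS, hse⟩; exact ha ((e.injective hse) ▸ hsS)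
  · rintro ⟨s, hsS, hse⟩; exact hb ((e.injective hse) ▸ hsS)
  · intro r; exact hnr ((reach_map_iff e).mp r)
  · rintro s ⟨s0, hs0, rfl⟩
    obtain ⟨⟨c1, hc1, hr1⟩, ⟨c2, hc2, hr2⟩⟩ := hcond s0 hs0
    exact ⟨⟨e c1, e.map_rel_iff.mpr hc1, reach_map e hr1⟩,
      ⟨e c2, e.map_rel_iff.mpr hc2, reach_map e hr2⟩⟩

lemma tight_diam (hconn : G.Connected) (hlf : ∀ v : V, (G.neighborSet v).Finite)
    (htrans : ∀ u v : V, ∃ e : G ≃g G, e u = v) (k : ℕ) :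
    ∃ D : ℕ, ∀ (S : Set V) (a b : V), S.Finite → S.ncard < k → Tight G S a b →
      ∀ x ∈ S, ∀ y ∈ S, G.dist x y ≤ D := by
  classical
  have hne : Nonempty V := hconn.nonempty
  obtain ⟨o⟩ := hne
  set 𝒯 := {S : Set V | o ∈ S ∧ S.Finite ∧ S.ncard < k ∧
    ∃ a b, G.Adj o a ∧ G.Adj o b ∧ Tight G S a b} with h𝒯
  have h𝒯fin : 𝒯.Finite := by
    have hsub : 𝒯 ⊆ ⋃ a ∈ G.neighborSet o, ⋃ b ∈ G.neighborSet o,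
        {S : Set V | o ∈ S ∧ S.Finite ∧ S.ncard < k ∧ Tight G S a b} := by
      rintro S ⟨hoS, hfin, hcard, a, b, hadja, hadjb, htight⟩
      exact Set.mem_biUnion hadja (Set.mem_biUnion hadjb ⟨hoS, hfin, hcard, htight⟩)
    exact (Set.Finite.biUnion (hlf o) (fun a _ => Set.Finite.biUnion (hlf o)
      (fun b _ => tw_fixed hconn hlf o k a b))).subset hsub
  set E : Set (V × V) := ⋃ S ∈ 𝒯, S ×ˢ S with hE
  have hEfin : E.Finite :=
    Set.Finite.biUnion h𝒯fin (fun S hS => hS.2.1.prod hS.2.1)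
  have hDfin : ((fun p : V × V => G.dist p.1 p.2) '' E).Finite := hEfin.image _
  set D := sSup ((fun p : V × V => G.dist p.1 p.2) '' E) with hD
  have hDle : ∀ p ∈ E, G.dist p.1 p.2 ≤ D :=
    fun p hp => le_csSup hDfin.bddAbove ⟨p, hp, rfl⟩
  refine ⟨D, ?_⟩
  intro S a b hfin hcard htight x hx y hy
  obtain ⟨e, he⟩ := htrans x o
  have htight' : Tight G (e '' S) (e a) (e b) := tight_map e htight
  have hoS' : o ∈ e '' S := ⟨x, hx, he⟩
  obtain ⟨⟨c1, hc1, hr1⟩, ⟨c2, hc2, hr2⟩⟩ := htight'.2.2.2 o hoS'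
  have htight'' : Tight G (e '' S) c1 c2 :=
    tight_symm (tight_rebase (tight_symm (tight_rebase htight' hr1)) hr2)
  have hmem : e '' S ∈ 𝒯 := by
    refine ⟨hoS', hfin.image e, ?_, c1, c2, hc1.symm, hc2.symm, htight''⟩
    calc (e '' S).ncard ≤ S.ncard := (Set.ncard_image_of_injective S e.injective).le
    _ < k := hcard
  have hpE : ((e x : V), (e y : V)) ∈ E :=
    Set.mem_biUnion hmem (Set.mk_mem_prod ⟨x, hx, rfl⟩ ⟨y, hy, rfl⟩)
  have := hDle _ hpE
  rwa [dist_map hconn e x y] at this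

lemma walk_along_aux {g : ℤ → V} : ∀ (n : ℕ) (a : ℤ),
    (∀ i : ℤ, a ≤ i → i < a + n → G.Adj (g i) (g (i + 1))) →
    ∃ w : G.Walk (g a) (g (a + n)), ∀ v ∈ w.support, ∃ i, a ≤ i ∧ i ≤ a + n ∧ v = g i := by
  intro n
  induction n with
  | zero =>
    intro a _
    refine ⟨(Walk.nil).copy rfl (by norm_num), ?_⟩
    intro v hv
    simp only [Walk.support_copy, Walk.support_nil, List.mem_singleton] at hv
    exact ⟨a, le_refl a, by omega, by simp [hv]⟩
  | succ n ih =>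
    intro a hadj
    have hadj0 : G.Adj (g a) (g (a + 1)) := hadj a (le_refl a) (by push_cast; omega)
    obtain ⟨w, hw⟩ := ih (a + 1) (fun i h1 h2 => hadj i (by omega) (by push_cast at h2 ⊢; omega))
    refine ⟨(Walk.cons hadj0 w).copy rfl (by push_cast; ring_nf), ?_⟩
    intro v hv
    simp only [Walk.support_copy, Walk.support_cons, List.mem_cons] at hv
    rcases hv with rfl | hv
    · exact ⟨a, le_refl a, by push_cast; omega, rfl⟩
    · obtain ⟨i, h1, h2, h3⟩ := hw v hv
      exact ⟨i, by omega, by push_cast at h2 ⊢; omega, h3⟩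

/-- build a walk along a discrete geodesic-like function -/
lemma walk_along {g : ℤ → V} {a b : ℤ} (hab : a ≤ b)
    (hadj : ∀ i : ℤ, a ≤ i → i < b → G.Adj (g i) (g (i + 1))) :
    ∃ w : G.Walk (g a) (g b), ∀ v ∈ w.support, ∃ i, a ≤ i ∧ i ≤ b ∧ v = g i := by
  obtain ⟨n, hn⟩ : ∃ n : ℕ, b = a + n := ⟨(b - a).toNat, by omega⟩
  subst hn
  exact walk_along_aux n a hadj

/-- a "configuration at scale s": a geodesic segment of length 2s centred at o whose
endpoints are connected by a walk far away from o, normalised to `o` outside. -/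
def IsConf (G : SimpleGraph V) (o : V) (s : ℕ) (g : ℤ → V) : Prop :=
  g 0 = o ∧
  (∀ i : ℤ, ((s : ℤ) < i ∨ i < -(s:ℤ)) → g i = o) ∧
  (∀ i j : ℤ, -(s : ℤ) ≤ i → i ≤ j → j ≤ (s : ℤ) → G.dist (g i) (g j) = (j - i).toNat) ∧
  (∃ w : G.Walk (g (s : ℤ)) (g (-(s : ℤ))), ∀ v ∈ w.support, (s : ℕ) ≤ G.dist o v)

def truncF (o : V) (s : ℕ) (g : ℤ → V) : ℤ → V :=
  fun i => if -(s:ℤ) ≤ i ∧ i ≤ (s : ℤ) then g i else o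

lemma conf_dist_o {o : V} {s : ℕ} {g : ℤ → V} (hg : IsConf G o s g) {i : ℤ}
    (h1 : -(s:ℤ) ≤ i) (h2 : i ≤ (s:ℤ)) : G.dist o (g i) = i.natAbs := by
  obtain ⟨h0, -, hd, -⟩ := hg
  rcases le_or_gt 0 i with hi | hi
  · have := hd 0 i (by omega) hi h2
    rw [h0] at this
    rw [this]
    omega
  · have := hd i 0 h1 (by omega) (by omega)
    rw [h0] at this
    rw [SimpleGraph.dist_comm] at this
    rw [this]
    omega

lemma conf_adj {o : V} {s : ℕ} {g : ℤ → V} (hg : IsConf G o s g)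
    {i : ℤ} (h1 : -(s:ℤ) ≤ i) (h2 : i < (s:ℤ)) : G.Adj (g i) (g (i + 1)) := by
  have := hg.2.2.1 i (i+1) h1 (by omega) (by omega)
  rw [← SimpleGraph.dist_eq_one_iff_adj, this]
  omega

lemma conf_trunc {o : V} {s t : ℕ} (h : s ≤ t) {g : ℤ → V} (hg : IsConf G o t g) :
    IsConf G o s (truncF o s g) := by
  have hst : (s : ℤ) ≤ (t : ℤ) := by exact_mod_cast h
  have hval : ∀ i : ℤ, -(s:ℤ) ≤ i → i ≤ (s:ℤ) → truncF o s g i = g i := by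
    intro i hi1 hi2
    have : -(s:ℤ) ≤ i ∧ i ≤ (s:ℤ) := ⟨hi1, hi2⟩
    simp only [truncF, if_pos this]
  refine ⟨?_, ?_, ?_, ?_⟩
  · rw [hval 0 (by simp) (by simp)]; exact hg.1
  · intro i hi
    have hni : ¬ (-(s:ℤ) ≤ i ∧ i ≤ (s:ℤ)) := by omega
    simp only [truncF, if_neg hni]
  · intro i j hi hij hj
    rw [hval i (by omega) (by omega), hval j (by omega) (by omega)]
    exact hg.2.2.1 i j (by omega) hij (by omega)
  · have e1 : truncF o s g (s:ℤ) = g (s:ℤ) := hval _ (by omega) (by omega)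
    have e2 : truncF o s g (-(s:ℤ)) = g (-(s:ℤ)) := hval _ (by omega) (by omega)
    obtain ⟨w1, hw1⟩ := walk_along (G := G) (g := g) (a := (s:ℤ)) (b := (t:ℤ)) hst
      (fun i h1 h2 => conf_adj hg (by omega) h2)
    obtain ⟨w2, hw2⟩ := walk_along (G := G) (g := g) (a := -(t:ℤ)) (b := -(s:ℤ)) (by omega)
      (fun i h1 h2 => conf_adj hg h1 (by omega))
    obtain ⟨w0, hw0⟩ := hg.2.2.2
    refine ⟨((w1.append w0).append w2).copy e1.symm e2.symm, ?_⟩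
    intro v hv
    rw [Walk.support_copy] at hv
    rcases (Walk.mem_support_append_iff _ _).mp hv with hv | hv
    · rcases (Walk.mem_support_append_iff _ _).mp hv with hv | hv
      · obtain ⟨i, h1, h2, rfl⟩ := hw1 v hv
        have := conf_dist_o hg (i := i) (by omega) (by omega)
        rw [this]
        omega
      · exact le_trans h (hw0 v hv)
    · obtain ⟨i, h1, h2, rfl⟩ := hw2 v hv
      have := conf_dist_o hg (i := i) (by omega) (by omega)
      rw [this]
      omega

lemma trunc_self {o : V} {s : ℕ} {g : ℤ → V} (hg : IsConf G o s g) :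
    truncF o s g = g := by
  funext i
  by_cases hi : -(s:ℤ) ≤ i ∧ i ≤ (s:ℤ)
  · simp only [truncF, if_pos hi]
  · simp only [truncF, if_neg hi]
    exact (hg.2.1 i (by omega)).symm

lemma trunc_trunc {o : V} {s s' : ℕ} (h : s ≤ s') (g : ℤ → V) :
    truncF o s (truncF o s' g) = truncF o s g := by
  funext i
  by_cases hi : -(s:ℤ) ≤ i ∧ i ≤ (s:ℤ)
  · have hi' : -(s':ℤ) ≤ i ∧ i ≤ (s':ℤ) := by omega
    simp only [truncF, if_pos hi, if_pos hi']
  · simp only [truncF, if_neg hi]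

lemma conf_finite (hconn : G.Connected) (hlf : ∀ v : V, (G.neighborSet v).Finite)
    (o : V) (s : ℕ) : Finite {g : ℤ → V // IsConf G o s g} := by
  have hball := ball_finite hconn hlf o s
  haveI : Finite {v : V // G.dist o v ≤ s} := hball.to_subtype
  haveI : Finite ((Finset.Icc (-(s:ℤ)) (s:ℤ)) → {v : V // G.dist o v ≤ s}) :=
    Pi.finite
  refine Finite.of_injective (β := (Finset.Icc (-(s:ℤ)) (s:ℤ)) → {v : V // G.dist o v ≤ s})
    (fun g i => ⟨g.val i.val, by
      have hmem := i.prop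
      rw [Finset.mem_Icc] at hmem
      have := conf_dist_o g.prop (i := i.val) hmem.1 hmem.2
      rw [this]
      omega⟩) ?_
  intro g g' hgg
  ext i
  by_cases hi : -(s:ℤ) ≤ i ∧ i ≤ (s:ℤ)
  · have : i ∈ Finset.Icc (-(s:ℤ)) (s:ℤ) := Finset.mem_Icc.mpr ⟨hi.1, hi.2⟩
    have := congrFun hgg ⟨i, this⟩
    simpa using this
  · rw [g.prop.2.1 i (by omega), g'.prop.2.1 i (by omega)]

lemma lam_exists (hconn : G.Connected) (hlf : ∀ v : V, (G.neighborSet v).Finite)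
    (o : V) (hconf : ∀ s : ℕ, ∃ g, IsConf G o s g) :
    ∃ lam : ℤ → V, lam 0 = o ∧
      (∀ i j : ℤ, i ≤ j → G.dist (lam i) (lam j) = (j - i).toNat) ∧
      (∀ s : ℕ, ∃ w : G.Walk (lam (s:ℤ)) (lam (-(s:ℤ))), ∀ v ∈ w.support,
        (s:ℕ) ≤ G.dist o v) := by
  classical
  let F : ℕᵒᵖ ⥤ Type _ := {
    obj := fun n => {g : ℤ → V // IsConf G o n.unop g}
    map := fun {n m} f => TypeCat.ofHom fun g => ⟨truncF o m.unop g.val, conf_trunc (leOfHom f.unop) g.prop⟩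
    map_id := by
      intro n
      refine ConcreteCategory.hom_ext _ _ fun g => ?_
      exact Subtype.ext (trunc_self g.prop)
    map_comp := by
      intro n m l f f'
      refine ConcreteCategory.hom_ext _ _ fun g => ?_
      apply Subtype.ext
      show truncF o l.unop g.val = truncF o l.unop (truncF o m.unop g.val)
      exact (trunc_trunc (leOfHom f'.unop) g.val).symm }
  haveI : ∀ j : ℕᵒᵖ, Finite (F.obj j) := fun j => conf_finite hconn hlf o j.unop
  haveI : ∀ j : ℕᵒᵖ, Nonempty (F.obj j) := by
    intro j
    obtain ⟨g, hg⟩ := hconf j.unop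
    exact ⟨⟨g, hg⟩⟩
  obtain ⟨σ, hσ⟩ := nonempty_sections_of_finite_inverse_system F
  set lam : ℤ → V := fun i => (σ (Opposite.op i.natAbs)).val i with hlam
  have hcompat : ∀ (t : ℕ) (i : ℤ), -(t:ℤ) ≤ i → i ≤ (t:ℤ) →
      (σ (Opposite.op t)).val i = lam i := by
    intro t i h1 h2
    set n := i.natAbs with hn
    have hnt : n ≤ t := by omega
    have := hσ (j := Opposite.op t) (j' := Opposite.op n) (Quiver.Hom.op (homOfLE hnt))
    have hval := congrFun (congrArg Subtype.val this) i
    have : truncF o n (σ (Opposite.op t)).val i = (σ (Opposite.op t)).val i := by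
      have hi : -(n:ℤ) ≤ i ∧ i ≤ (n:ℤ) := by omega
      simp only [truncF, if_pos hi]
    rw [← this]
    exact hval
  refine ⟨lam, ?_, ?_, ?_⟩
  · have := hcompat 0 0 (by simp) (by simp)
    rw [← this]
    have hP : IsConf G o 0 (σ (Opposite.op 0)).val := (σ (Opposite.op 0)).prop
    exact hP.1
  · intro i j hij
    set t : ℕ := i.natAbs + j.natAbs with ht
    have h1 := hcompat t i (by omega) (by omega)
    have h2 := hcompat t j (by omega) (by omega)
    rw [← h1, ← h2]
    have hP : IsConf G o t (σ (Opposite.op t)).val := (σ (Opposite.op t)).prop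
    exact hP.2.2.1 i j (by omega) hij (by omega)
  · intro s
    have hP : IsConf G o s (σ (Opposite.op s)).val := (σ (Opposite.op s)).prop
    obtain ⟨w, hw⟩ := hP.2.2.2
    have e1 : (σ (Opposite.op s)).val (s:ℤ) = lam (s:ℤ) := hcompat s s (by omega) (by omega)
    have e2 : (σ (Opposite.op s)).val (-(s:ℤ)) = lam (-(s:ℤ)) := hcompat s _ (by omega) (by omega)
    exact ⟨w.copy e1 e2, by
      intro v hv
      rw [Walk.support_copy] at hv
      exact hw v hv⟩

lemma conf_of_failure (hconn : G.Connected) {o u v : V} {s : ℕ}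
    (η : G.Walk u v) (hgeo : η.length = G.dist u v) (ho : o ∈ η.support)
    (γ : G.Walk u v) (hγ : ∀ x ∈ γ.support, s < G.dist o x) :
    ∃ g, IsConf G o s g := by
  obtain ⟨t, hto, htle⟩ := Walk.mem_support_iff_exists_getVert.mp ho
  have hu : s < G.dist o u := hγ u γ.start_mem_support
  have hv' : s < G.dist o v := hγ v γ.end_mem_support
  have hdu : G.dist u o = t := by
    have := geodesic_getVert_dist hconn η hgeo (Nat.zero_le t) htle
    rw [η.getVert_zero, hto] at this
    omega
  have hdv : G.dist o v = η.length - t := by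
    have := geodesic_getVert_dist hconn η hgeo htle (le_refl η.length)
    rw [η.getVert_length, hto] at this
    omega
  have hts : s < t := by rw [SimpleGraph.dist_comm] at hdu; omega
  have hsv : t + s < η.length := by omega
  set g : ℤ → V := fun i =>
    if -(s:ℤ) ≤ i ∧ i ≤ (s:ℤ) then η.getVert ((t:ℤ) + i).toNat else o with hg
  have hgval : ∀ i : ℤ, -(s:ℤ) ≤ i → i ≤ (s:ℤ) → g i = η.getVert ((t:ℤ) + i).toNat := by
    intro i h1 h2
    simp only [hg, if_pos (⟨h1, h2⟩ : -(s:ℤ) ≤ i ∧ i ≤ (s:ℤ))]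
  refine ⟨g, ?_, ?_, ?_, ?_⟩
  · rw [hgval 0 (by omega) (by omega)]
    simpa using hto
  · intro i hi
    have hni : ¬(-(s:ℤ) ≤ i ∧ i ≤ (s:ℤ)) := by omega
    simp only [hg, if_neg hni]
  · intro i j hi hij hj
    rw [hgval i hi (by omega), hgval j (by omega) hj]
    have h1 : ((t:ℤ) + i).toNat ≤ ((t:ℤ) + j).toNat := by omega
    have h2 : ((t:ℤ) + j).toNat ≤ η.length := by omega
    have := geodesic_getVert_dist hconn η hgeo h1 h2
    rw [this]
    omega
  · -- the connection walk
    have e1 : g (s:ℤ) = η.getVert (t + s) := by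
      rw [hgval (s:ℤ) (by omega) (by omega)]
      have h' : ((t:ℤ) + (s:ℤ)).toNat = t + s := by omega
      rw [h']
    have e2 : g (-(s:ℤ)) = η.getVert (t - s) := by
      rw [hgval (-(s:ℤ)) (by omega) (by omega)]
      have h' : ((t:ℤ) + (-(s:ℤ))).toNat = t - s := by omega
      rw [h']
    obtain ⟨w2, hw2len, hw2v⟩ := walk_from_to η (i := t + s) (j := η.length) (by omega) le_rfl
    obtain ⟨w1, hw1len, hw1v⟩ := walk_from_to η (i := 0) (j := t - s) (by omega) (by omega)
    have hdo : ∀ j' : ℕ, j' ≤ η.length →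
        G.dist o (η.getVert j') = if t ≤ j' then j' - t else t - j' := by
      intro j' hj'
      rcases le_or_gt t j' with h | h
      · have := geodesic_getVert_dist hconn η hgeo h hj'
        rw [hto] at this
        rw [if_pos h]
        exact this
      · have := geodesic_getVert_dist hconn η hgeo h.le htle
        rw [hto] at this
        rw [if_neg (by omega), SimpleGraph.dist_comm]
        exact this
    set wv : G.Walk (η.getVert (t + s)) v := w2.copy rfl η.getVert_length
    set wu : G.Walk u (η.getVert (t - s)) := w1.copy η.getVert_zero rfl
    refine ⟨((wv.append γ.reverse).append wu).copy e1.symm e2.symm, ?_⟩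
    intro x hx
    rw [Walk.support_copy] at hx
    rcases (Walk.mem_support_append_iff _ _).mp hx with hx | hx
    · rcases (Walk.mem_support_append_iff _ _).mp hx with hx | hx
      · -- on w2 : indices ≥ t + s
        have hx' : x ∈ w2.support := by simpa [wv, Walk.support_copy] using hx
        obtain ⟨a, ha, hale⟩ := Walk.mem_support_iff_exists_getVert.mp hx'
        rw [hw2v a] at ha
        have hmin : t + s ≤ min (t + s + a) η.length := by omega
        have := hdo (min (t + s + a) η.length) (by omega)
        rw [ha] at this
        rw [this]
        have hle : t ≤ min (t + s + a) η.length := by omega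
        simp only [if_pos hle]
        omega
      · -- on γ.reverse
        have hx' : x ∈ γ.support := by
          rwa [Walk.support_reverse, List.mem_reverse] at hx
        exact (hγ x hx').le
    · -- on w1 : indices ≤ t - s
      have hx' : x ∈ w1.support := by simpa [wu, Walk.support_copy] using hx
      obtain ⟨a, ha, hale⟩ := Walk.mem_support_iff_exists_getVert.mp hx'
      rw [hw1v a] at ha
      have hminle : min (0 + a) (t - s) ≤ t - s := by omega
      have := hdo (min (0 + a) (t - s)) (by omega)
      rw [ha] at this
      rw [this]
      have hle : ¬ (t ≤ min (0 + a) (t - s)) ∨ s = 0 := by omega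
      rcases hle with hle | hle
      · simp only [if_neg hle]
        omega
      · omega

end EndsAux
/-- If all the ends of a connected, locally finite, vertex-transitive graph have diameter
`< k`, then there is `m > 0` such that every vertex on a geodesic between `u` and `v` is
at distance at most `m` from every path between `u` and `v`. -/
theorem ends_bounded_diam_imp_geodesic_path_condition {V : Type*} (G : SimpleGraph V)
    (hconn : G.Connected) (hlf : ∀ v : V, (G.neighborSet v).Finite)
    (htrans : ∀ u v : V, ∃ e : G ≃g G, e u = v)
    (k : ℕ) (hk : 0 < k) (hends : ∀ p : ℕ → V, IsInfPath G p → EndDiamLT G p k) :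
    ∃ m : ℕ, 0 < m ∧ ∀ (u v : V) (η : G.Walk u v), η.length = G.dist u v →
      ∀ z ∈ η.support, ∀ γ : G.Walk u v, ∃ x ∈ γ.support, G.dist z x ≤ m := by
  classical
  by_contra hcon
  push_neg at hcon
  obtain ⟨o⟩ := hconn.nonempty
  have hconf : ∀ s : ℕ, ∃ g, EndsAux.IsConf G o s g := by
    intro s
    obtain ⟨u, v, η, hgeo, z, hz, γ, hγ⟩ := hcon (s + 1) (Nat.succ_pos s)
    obtain ⟨e, he⟩ := htrans z o
    have hgeo' : (η.map e.toHom).length = G.dist (e u) (e v) := by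
      rw [SimpleGraph.Walk.length_map, hgeo, EndsAux.dist_map hconn e]
    have ho : o ∈ (η.map e.toHom).support := by
      rw [SimpleGraph.Walk.support_map]
      exact he ▸ List.mem_map_of_mem hz
    refine EndsAux.conf_of_failure hconn (η.map e.toHom) hgeo' ho (γ.map e.toHom) ?_
    intro x hx
    rw [SimpleGraph.Walk.support_map, List.mem_map] at hx
    obtain ⟨x0, hx0, rfl⟩ := hx
    have hgt := hγ x0 hx0
    have hre : G.dist o (e x0) = G.dist z x0 := by
      rw [← he, EndsAux.dist_map hconn e]
    have hco : G.dist o (e.toHom x0) = G.dist o (e x0) := rfl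
    omega
  obtain ⟨lam, hlam0, hlamd, hlamw⟩ := EndsAux.lam_exists hconn hlf o hconf
  have hdisto : ∀ i : ℤ, G.dist o (lam i) = i.natAbs := by
    intro i
    rcases le_or_gt 0 i with h | h
    · have hd := hlamd 0 i h
      rw [hlam0] at hd
      rw [hd]
      omega
    · have hd := hlamd i 0 h.le
      rw [hlam0] at hd
      rw [SimpleGraph.dist_comm, hd]
      omega
  set p : ℕ → V := fun n => lam (n : ℤ) with hp
  have hpinj : Function.Injective p := by
    intro a b hab
    have hab' : lam (a:ℤ) = lam (b:ℤ) := hab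
    rcases le_total a b with h | h
    · have hd := hlamd (a:ℤ) (b:ℤ) (by exact_mod_cast h)
      rw [hab', SimpleGraph.dist_self] at hd
      omega
    · have hd := hlamd (b:ℤ) (a:ℤ) (by exact_mod_cast h)
      rw [← hab', SimpleGraph.dist_self] at hd
      omega
  have hpath : IsInfPath G p := by
    refine ⟨hpinj, fun n => ?_⟩
    have hc : ((n + 1 : ℕ) : ℤ) = (n : ℤ) + 1 := by push_cast; ring
    have hd := hlamd (n : ℤ) ((n : ℤ) + 1) (by omega)
    have hone : G.dist (p n) (p (n + 1)) = 1 := by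
      show G.dist (lam (n : ℤ)) (lam ((n + 1 : ℕ) : ℤ)) = 1
      rw [hc, hd]
      omega
    exact SimpleGraph.dist_eq_one_iff_adj.mp hone
  obtain ⟨B, hB1, hB2, hB3, hB4, -⟩ := hends p hpath
  have hBchain : ∀ n n' : ℕ, n ≤ n' → B n' ⊆ B n := by
    intro n n' h
    induction n', h using Nat.le_induction with
    | base => exact subset_rfl
    | succ m hm ih => exact (hB2 m).trans ih
  have hleave : ∀ w : V, ∃ N, ∀ n, N ≤ n → w ∉ B n := by
    intro w
    have hw : w ∉ ⋂ n, B n := by rw [hB4]; exact Set.notMem_empty w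
    rw [Set.mem_iInter] at hw
    push_neg at hw
    obtain ⟨N, hN⟩ := hw
    exact ⟨N, fun n hn hwn => hN (hBchain N n hn hwn)⟩
  obtain ⟨D, hD⟩ := EndsAux.tight_diam hconn hlf htrans k
  have hballD := EndsAux.ball_finite hconn hlf o D
  choose NB hNB using hleave
  obtain ⟨N0, hN0⟩ : BddAbove (NB '' {v : V | G.dist o v ≤ D}) := (hballD.image NB).bddAbove
  have hfar : ∀ w : V, w ∈ B N0 → D < G.dist o w := by
    intro w hw
    by_contra hle
    push_neg at hle
    exact hNB w N0 (hN0 ⟨w, hle, rfl⟩) hw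
  have hSfin : (bdry G (B N0)).Finite := (hB1 N0).1
  have hScard : (bdry G (B N0)).ncard < k := (hB1 N0).2
  have hSsubB : bdry G (B N0) ⊆ B N0 := fun x hx => hx.1
  have honB : o ∉ B N0 := by
    intro h
    have h2 := hfar o h
    rw [SimpleGraph.dist_self] at h2
    omega
  obtain ⟨R, hR⟩ : BddAbove ((fun x => G.dist o x) '' bdry G (B N0)) :=
    (hSfin.image _).bddAbove
  have hSR : ∀ x ∈ bdry G (B N0), G.dist o x ≤ R := fun x hx => hR ⟨x, hx, rfl⟩
  obtain ⟨M1, hM1⟩ : BddAbove {n : ℕ | p n ∉ B N0} := (hB3 N0).bddAbove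
  set sstar : ℕ := max (M1 + 1) (R + 1) with hsstar
  have hpin : ∀ j : ℕ, sstar ≤ j → lam (j : ℤ) ∈ B N0 := by
    intro j hj
    by_contra hnot
    have : j ≤ M1 := hM1 hnot
    omega
  have hadjlam : ∀ i : ℤ, G.Adj (lam i) (lam (i + 1)) := by
    intro i
    have hd := hlamd i (i + 1) (by omega)
    refine SimpleGraph.dist_eq_one_iff_adj.mp ?_
    rw [hd]
    omega
  obtain ⟨wc, hwc⟩ := hlamw sstar
  have hreach1 : EndsAux.Reach G (bdry G (B N0)) (lam (sstar : ℤ)) (lam (-(sstar : ℤ))) := by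
    refine ⟨wc, fun x hx hxS => ?_⟩
    have h1 := hwc x hx
    have h2 := hSR x hxS
    omega
  have hlamsin : lam (sstar : ℤ) ∈ B N0 := hpin sstar le_rfl
  have hlamnegin : lam (-(sstar : ℤ)) ∈ B N0 := EndsAux.reach_stay hreach1 hlamsin
  have hnoreach : ¬ EndsAux.Reach G (bdry G (B N0)) o (lam (sstar : ℤ)) := by
    intro h
    exact honB (EndsAux.reach_stay h.symm hlamsin)
  have honS : o ∉ bdry G (B N0) := fun h => honB (hSsubB h)
  have hlamsnotS : lam (sstar : ℤ) ∉ bdry G (B N0) := by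
    intro h
    have h2 := hSR _ h
    rw [hdisto] at h2
    omega
  obtain ⟨T, hTsub, htight⟩ := EndsAux.trim (bdry G (B N0)).ncard (bdry G (B N0)) hSfin
    le_rfl o (lam (sstar : ℤ)) honS hlamsnotS hnoreach
  obtain ⟨wp, hwp⟩ := EndsAux.walk_along (G := G) (g := lam) (a := 0) (b := (sstar : ℤ))
    (by omega) (fun i _ _ => hadjlam i)
  have hcross1 : ∃ i : ℤ, 0 ≤ i ∧ i ≤ (sstar : ℤ) ∧ lam i ∈ T := by
    by_contra hno
    push_neg at hno
    refine htight.2.2.1 ⟨wp.copy hlam0 rfl, ?_⟩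
    intro x hx
    rw [SimpleGraph.Walk.support_copy] at hx
    obtain ⟨i, h1, h2, rfl⟩ := hwp x hx
    exact hno i h1 h2
  obtain ⟨wn, hwn⟩ := EndsAux.walk_along (G := G) (g := lam) (a := -(sstar : ℤ)) (b := 0)
    (by omega) (fun i _ _ => hadjlam i)
  have hcross2 : ∃ i : ℤ, -(sstar : ℤ) ≤ i ∧ i ≤ 0 ∧ lam i ∈ T := by
    by_contra hno
    push_neg at hno
    have hr2 : EndsAux.Reach G T (lam (-(sstar : ℤ))) o := by
      refine ⟨wn.copy rfl hlam0, ?_⟩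
      intro x hx
      rw [SimpleGraph.Walk.support_copy] at hx
      obtain ⟨i, h1, h2, rfl⟩ := hwn x hx
      exact hno i h1 h2
    exact htight.2.2.1 (hr2.symm.trans ((hreach1.mono hTsub).symm))
  obtain ⟨i, hi0, his, hiT⟩ := hcross1
  obtain ⟨j, hjs, hj0, hjT⟩ := hcross2
  have hTfin : T.Finite := hSfin.subset hTsub
  have hTcard : T.ncard < k := lt_of_le_of_lt (Set.ncard_le_ncard hTsub hSfin) hScard
  have hdxy := hD T o (lam (sstar : ℤ)) hTfin hTcard htight _ hiT _ hjT
  have hfi : D < G.dist o (lam i) := hfar _ (hSsubB (hTsub hiT))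
  rw [hdisto] at hfi
  have hij : G.dist (lam j) (lam i) = (i - j).toNat := hlamd j i (by omega)
  rw [SimpleGraph.dist_comm] at hij
  rw [hij] at hdxy
  omega
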